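/- For every positive integer k there exists an integer x_k with 0 ≤ x_k ≤ 2^k - 1 such that for every i with 0 ≤ i ≤ k-1, the coefficient of 2^i in the binary representation of x_k - i is 0; equivalently, (x_k - i) mod 2^(i+1) lies in {0, 1, ..., 2^i - 1}. -/

import Mathlib

theorem stmt0 : ∀ k : ℕ, 0 < k →
    ∃ x : ℕ, x ≤ 2 ^ k - 1 ∧ ∀ i < k, i ≤ x ∧ (x - i) % 2 ^ (i + 1) < 2 ^ i := by
  intro k hk
  induction k with
  | zero => omega
  | succ n ih =>
    rcases Nat.eq_zero_or_pos n with h0 | hn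
    · subst h0
      refine ⟨0, by norm_num, ?_⟩
      intro i hi
      interval_cases i
      simp
    · obtain ⟨x, hxb, hx⟩ := ih hn
      have hpow : 2 ^ n ≤ 2 ^ (n + 1) := Nat.pow_le_pow_right (by norm_num) (Nat.le_succ n)
      have hnlt : n < 2 ^ n := Nat.lt_two_pow_self (n := n)
      by_cases hxn : n ≤ x
      · refine ⟨x, by omega, ?_⟩
        intro i hi
        rcases Nat.lt_succ_iff_lt_or_eq.mp hi with h | h
        · exact hx i h
        · subst h
          refine ⟨hxn, ?_⟩
          have h1 : x - i < 2 ^ i := by omega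
          have h2 : x - i < 2 ^ (i + 1) := by
            have : 2 ^ i ≤ 2 ^ (i + 1) := Nat.pow_le_pow_right (by norm_num) (Nat.le_succ i)
            omega
          rw [Nat.mod_eq_of_lt h2]
          exact h1
      · -- then x = n - 1 (x ≥ n - 1 from condition at i = n-1)
        have hx1 : n - 1 ≤ x := (hx (n - 1) (by omega)).1
        have hxe : x = n - 1 := by omega
        refine ⟨x + 2 ^ n, by omega, ?_⟩
        intro i hi
        rcases Nat.lt_succ_iff_lt_or_eq.mp hi with h | h
        · obtain ⟨h1, h2⟩ := hx i h
          refine ⟨by omega, ?_⟩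
          have hd : 2 ^ (i + 1) ∣ 2 ^ n := pow_dvd_pow 2 (by omega)
          have : x + 2 ^ n - i = x - i + 2 ^ n := by omega
          obtain ⟨c, hc⟩ := hd
          rw [this, hc, Nat.add_mul_mod_self_left]
          exact h2
        · subst h
          refine ⟨by omega, ?_⟩
          have he : x + 2 ^ i - i = 2 ^ i - 1 := by omega
          rw [he, Nat.mod_eq_of_lt (by omega)]
          omega
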